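/- Let 0 < d < n be reals with t0 = d/2, and let m be a positive real. If t < t0/(m+1) + (m/(m+1)) * (n - sqrt(n(n-d))) and t > t0, then (tm + t - t0)^2 / (4(t - t0)) > n m (m+1) / 2. -/

import Mathlib

theorem fixed_multiplicity_lecc (n d t m : ℝ) (hd : 0 < d) (hdn : d < n) (hm : 0 < m)
    (htu : t < d / 2 / (m + 1) + (m / (m + 1)) * (n - Real.sqrt (n * (n - d))))
    (htl : t > d / 2) :
    (t * m + t - d / 2) ^ 2 / (4 * (t - d / 2)) > n * m * (m + 1) / 2 := by
  have hnd : 0 ≤ n * (n - d) := by nlinarith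
  set r := Real.sqrt (n * (n - d)) with hr
  have hr2 : r ^ 2 = n * (n - d) := Real.sq_sqrt hnd
  have hr0 : 0 ≤ r := Real.sqrt_nonneg _
  have hm1 : (0:ℝ) < m + 1 := by linarith
  have heq : d / 2 / (m + 1) + (m / (m + 1)) * (n - r) = (d / 2 + m * (n - r)) / (m + 1) := by
    field_simp
  rw [heq] at htu
  have h1 : t * (m + 1) < d / 2 + m * (n - r) := (lt_div_iff₀ hm1).mp htu
  have hmr : 0 ≤ m * r := mul_nonneg hm.le hr0
  have hs : 0 < 4 * (t - d / 2) := by linarith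
  rw [gt_iff_lt, lt_div_iff₀ hs]
  have h2 : (m * r) ^ 2 = m ^ 2 * (n * (n - d)) := by rw [mul_pow, hr2]
  nlinarith [mul_pos (show 0 < m * (n - r) - (t * m + t - d / 2) by linarith)
    (show 0 < m * (n + r) - (t * m + t - d / 2) by linarith), hr2, h2]
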